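/- Waterfilling is nonexpansive in the ‖·‖_{1,∞} norm: for x₀, y₀ ∈ ℝ₊ᴺ and waterlevels μ_x, μ_y chosen so that Σ_k (μ_x − x₀(k))⁺ = Σ_k (μ_y − y₀(k))⁺ = P_T for a fixed P_T ≥ 0, one has ‖(μ_x·1 − x₀)⁺ − (μ_y·1 − y₀)⁺‖_{1,∞} ≤ ‖x₀ − y₀‖_{1,∞}, where ‖z‖_{1,∞} = max{‖(z)⁺‖₁, ‖(z)⁻‖₁}. -/
import Mathlib


/-- The `‖·‖_{1,∞}` norm: `max{‖x⁺‖₁, ‖x⁻‖₁}`. -/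
noncomputable def oneInfNorm {N : ℕ} (x : Fin N → ℝ) : ℝ :=
  max (∑ k, max (x k) 0) (∑ k, max (-x k) 0)

lemma wf_aux (t s c : ℝ) (h : t - s ≤ c) (hc : 0 ≤ c) :
    max (max t 0 - max s 0) 0 ≤ c := by
  have h1 : max t 0 - max s 0 ≤ c := by
    have hs : s ≤ max s 0 := le_max_left _ _
    have hs0 : (0:ℝ) ≤ max s 0 := le_max_right _ _
    have : max t 0 ≤ max s 0 + c := max_le (by linarith) (by linarith)
    linarith
  exact max_le h1 hc

lemma wf_pos_neg (z : ℝ) : max z 0 - max (-z) 0 = z := by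
  rcases le_total z 0 with h | h
  · rw [max_eq_right h, max_eq_left (by linarith)]; ring
  · rw [max_eq_left h, max_eq_right (by linarith)]; ring

/-- Waterfilling is nonexpansive in the `‖·‖_{1,∞}` norm: if the waterlevels `μx, μy`
are chosen so that both waterfilling outputs have total power `P_T`, then
`‖(μx·1 − x₀)⁺ − (μy·1 − y₀)⁺‖_{1,∞} ≤ ‖x₀ − y₀‖_{1,∞}`. -/
theorem waterfilling_nonexpansive_oneInfNorm {N : ℕ}
    (x₀ y₀ : Fin N → ℝ) (hx : ∀ k, 0 ≤ x₀ k) (hy : ∀ k, 0 ≤ y₀ k)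
    (PT : ℝ) (hPT : 0 ≤ PT) (μx μy : ℝ)
    (hμx : ∑ k, max (μx - x₀ k) 0 = PT)
    (hμy : ∑ k, max (μy - y₀ k) 0 = PT) :
    oneInfNorm (fun k => max (μx - x₀ k) 0 - max (μy - y₀ k) 0) ≤
      oneInfNorm (fun k => x₀ k - y₀ k) := by
  set a : Fin N → ℝ := fun k => max (μx - x₀ k) 0 with ha
  set b : Fin N → ℝ := fun k => max (μy - y₀ k) 0 with hb
  have hsum : ∑ k, max (a k - b k) 0 = ∑ k, max (-(a k - b k)) 0 := by
    have h0 : ∑ k, (max (a k - b k) 0 - max (-(a k - b k)) 0) = 0 := by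
      have : ∀ k, max (a k - b k) 0 - max (-(a k - b k)) 0 = a k - b k :=
        fun k => wf_pos_neg _
      simp only [this, Finset.sum_sub_distrib, hμx, hμy, sub_self]
    rw [Finset.sum_sub_distrib] at h0
    linarith
  have hlhs : oneInfNorm (fun k => a k - b k) = ∑ k, max (a k - b k) 0 := by
    unfold oneInfNorm
    rw [← hsum, max_self]
  rw [hlhs]
  rcases le_total μx μy with hμ | hμ
  · have hb : ∑ k, max (a k - b k) 0 ≤ ∑ k, max (-(x₀ k - y₀ k)) 0 := by
      apply Finset.sum_le_sum
      intro k _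
      have hc : (0:ℝ) ≤ max (-(x₀ k - y₀ k)) 0 := le_max_right _ _
      have hd : (μx - x₀ k) - (μy - y₀ k) ≤ max (-(x₀ k - y₀ k)) 0 := by
        have : -(x₀ k - y₀ k) ≤ max (-(x₀ k - y₀ k)) 0 := le_max_left _ _
        linarith
      exact wf_aux _ _ _ hd hc
    exact hb.trans (le_max_right _ _)
  · rw [hsum]
    have hb : ∑ k, max (-(a k - b k)) 0 ≤ ∑ k, max (x₀ k - y₀ k) 0 := by
      apply Finset.sum_le_sum
      intro k _
      have hc : (0:ℝ) ≤ max (x₀ k - y₀ k) 0 := le_max_right _ _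
      have hd : (μy - y₀ k) - (μx - x₀ k) ≤ max (x₀ k - y₀ k) 0 := by
        have : x₀ k - y₀ k ≤ max (x₀ k - y₀ k) 0 := le_max_left _ _
        linarith
      have := wf_aux (μy - y₀ k) (μx - x₀ k) _ hd hc
      simpa [ha, hb, neg_sub] using this
    exact hb.trans (le_max_left _ _)
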